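/- arXiv:0905.4395 — 3 statements merged into one kernel-verified Lean document; each statement's English description precedes it below -/
import Mathlib

section
/- A group G satisfies the ascending chain condition on subgroups if and only if it satisfies the ascending chain condition on cosets (subsets A with A·A⁻¹·A ⊆ A). -/
open Pointwise

theorem acc_subgroups_iff_acc_cosets {G : Type*} [Group G] :
    (∀ f : ℕ → Subgroup G, Monotone f → ∃ n, ∀ m, n ≤ m → f m = f n) ↔
      (∀ f : ℕ → Set G, (∀ i, f i * (f i)⁻¹ * f i ⊆ f i) → Monotone f →
        ∃ n, ∀ m, n ≤ m → f m = f n) := by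
  constructor
  · intro h f hf hmono
    by_cases hne : ∃ i, (f i).Nonempty
    · obtain ⟨N, a, ha⟩ := hne
      have haM : ∀ m, N ≤ m → a ∈ f m := fun m hm => hmono hm ha
      -- key closure property
      have key : ∀ m, ∀ x y z, x ∈ f m → y ∈ f m → z ∈ f m → x * y⁻¹ * z ∈ f m := by
        intro m x y z hx hy hz
        exact hf m (Set.mul_mem_mul (Set.mul_mem_mul hx (Set.inv_mem_inv.mpr hy)) hz)
      let g : ℕ → Subgroup G := fun i =>
        { carrier := a⁻¹ • f (N + i)
          one_mem' := by
            refine Set.mem_smul_set_iff_inv_smul_mem.mpr ?_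
            simpa using haM _ (Nat.le_add_right N i)
          mul_mem' := by
            intro x y hx hy
            rw [Set.mem_smul_set_iff_inv_smul_mem] at hx hy ⊢
            simp only [inv_inv, smul_eq_mul] at hx hy ⊢
            have := key (N + i) (a * x) (a) (a * y) hx (haM _ (Nat.le_add_right N i)) hy
            simpa [smul_eq_mul, mul_assoc] using this
          inv_mem' := by
            intro x hx
            rw [Set.mem_smul_set_iff_inv_smul_mem] at hx ⊢
            simp only [inv_inv, smul_eq_mul] at hx ⊢
            have := key (N + i) a (a * x) a (haM _ (Nat.le_add_right N i)) hx
              (haM _ (Nat.le_add_right N i))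
            simpa [smul_eq_mul, mul_assoc, mul_inv_rev] using this }
      have hg : Monotone g := by
        intro i j hij
        have : (f (N + i) : Set G) ⊆ f (N + j) := hmono (by omega)
        exact fun x hx => by
          change x ∈ a⁻¹ • f (N + i) at hx
          change x ∈ a⁻¹ • f (N + j)
          rw [Set.mem_smul_set_iff_inv_smul_mem] at hx ⊢
          exact this hx
      obtain ⟨n, hn⟩ := h g hg
      refine ⟨N + n, fun m hm => ?_⟩
      have h1 : g (m - N) = g n := hn (m - N) (by omega)
      have h2 : a⁻¹ • f m = a⁻¹ • f (N + n) := by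
        have hNm : N + (m - N) = m := by omega
        have := congrArg (fun (s : Subgroup G) => (s : Set G)) h1
        simp only [g, Subgroup.coe_mk, hNm] at this
        simpa [g, hNm] using this
      calc f m = a • (a⁻¹ • f m) := by rw [smul_smul, mul_inv_cancel, one_smul]
        _ = a • (a⁻¹ • f (N + n)) := by rw [h2]
        _ = f (N + n) := by rw [smul_smul, mul_inv_cancel, one_smul]
    · push_neg at hne
      refine ⟨0, fun m _ => ?_⟩
      rw [hne m, hne 0]
  · intro h f hmono
    have := h (fun i => (f i : Set G)) (fun i => by
      rw [inv_coe_set, coe_mul_coe, coe_mul_coe])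
      (fun i j hij => SetLike.coe_subset_coe.mpr (hmono hij))
    obtain ⟨n, hn⟩ := this
    exact ⟨n, fun m hm => SetLike.coe_injective (hn m hm)⟩
end

section
/- Let G be a group, A a nonempty coset of G, g ∈ A, and H = A·A⁻¹. If {gᵢ : i ∈ I} generates H as a subgroup, then the coset generated by {gᵢg : i ∈ I} ∪ {g} equals A. -/
open Pointwise

/-- A coset of a group `G` is a subset closed under `(x, y, z) ↦ x * y⁻¹ * z`. -/
def IsCoset {G : Type*} [Group G] (A : Set G) : Prop := A * A⁻¹ * A ⊆ A

/-- The smallest coset containing a given subset. -/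
def cosetClosure {G : Type*} [Group G] (X : Set G) : Set G :=
  ⋂₀ {A : Set G | IsCoset A ∧ X ⊆ A}

theorem cosetClosure_of_subgroup_generators {G : Type*} [Group G] (A : Set G)
    (hA : IsCoset A) (hne : A.Nonempty) (g : G) (hg : g ∈ A)
    {I : Type*} (gi : I → G)
    (hgen : (Subgroup.closure (Set.range gi) : Set G) = A * A⁻¹) :
    cosetClosure (Set.range (fun i => gi i * g) ∪ {g}) = A := by
  apply subset_antisymm
  · apply Set.sInter_subset_of_mem
    refine ⟨hA, ?_⟩
    rintro x (⟨i, rfl⟩ | rfl)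
    · have h1 : gi i ∈ A * A⁻¹ := by
        rw [← hgen]; exact Subgroup.subset_closure ⟨i, rfl⟩
      exact hA (Set.mul_mem_mul h1 hg)
    · exact hg
  · intro a ha B hB
    obtain ⟨hBcoset, hXB⟩ := hB
    have hgB : g ∈ B := hXB (Or.inr rfl)
    set S : Subgroup G :=
      { carrier := {h | h * g ∈ B}
        one_mem' := by simpa using hgB
        mul_mem' := by
          intro x y hx hy
          have : x * g * (g)⁻¹ * (y * g) ∈ B :=
            hBcoset (Set.mul_mem_mul (Set.mul_mem_mul hx (Set.inv_mem_inv.2 hgB)) hy)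
          simpa [mul_assoc] using this
        inv_mem' := by
          intro x hx
          have : g * (x * g)⁻¹ * g ∈ B :=
            hBcoset (Set.mul_mem_mul (Set.mul_mem_mul hgB (Set.inv_mem_inv.2 hx)) hgB)
          simpa [mul_assoc, mul_inv_rev] using this } with hS
    have hle : Subgroup.closure (Set.range gi) ≤ S := by
      rw [Subgroup.closure_le]
      rintro x ⟨i, rfl⟩
      exact hXB (Or.inl ⟨i, rfl⟩)
    have hmem : a * g⁻¹ ∈ Subgroup.closure (Set.range gi) := by
      rw [← SetLike.mem_coe, hgen]
      exact Set.mul_mem_mul ha (Set.inv_mem_inv.2 hg)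
    have h2 : a * g⁻¹ * g ∈ B := hle hmem
    simpa using h2
end

section
/- Let G be a group, X ⊆ G a nonempty subset, a ∈ X, and let H be the subgroup generated by {xa⁻¹ : x ∈ X}. Then the smallest coset of G containing X equals Ha. -/
open Pointwise

theorem cosetClosure_eq_closure_mul {G : Type*} [Group G] (X : Set G)
    (a : G) (ha : a ∈ X) :
    cosetClosure X = (Subgroup.closure ((fun x => x * a⁻¹) '' X) : Set G) * {a} := by
  set H := Subgroup.closure ((fun x => x * a⁻¹) '' X) with hH
  have memHa : ∀ x : G, x ∈ (H : Set G) * {a} ↔ ∃ h ∈ H, h * a = x := by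
    intro x
    constructor
    · intro hx
      rw [Set.mem_mul] at hx
      obtain ⟨h, hh, b, hb, rfl⟩ := hx
      rw [Set.mem_singleton_iff] at hb
      exact ⟨h, hh, by rw [hb]⟩
    · rintro ⟨h, hh, rfl⟩
      exact ⟨h, hh, a, rfl, rfl⟩
  apply Set.Subset.antisymm
  · -- cosetClosure X ⊆ H * {a}: show H*{a} is a coset containing X
    apply Set.sInter_subset_of_mem
    constructor
    · -- IsCoset (H * {a})
      rintro x hx
      rw [Set.mem_mul] at hx
      obtain ⟨y, hy, z, hz, rfl⟩ := hx
      rw [Set.mem_mul] at hy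
      obtain ⟨u, hu, v, hv, rfl⟩ := hy
      rw [Set.mem_inv, memHa] at hv
      rw [memHa] at hu hz
      obtain ⟨h1, hh1, rfl⟩ := hu
      obtain ⟨h2, hh2, hv2⟩ := hv
      obtain ⟨h3, hh3, rfl⟩ := hz
      have hveq : v = a⁻¹ * h2⁻¹ := by
        have := congrArg (·⁻¹) hv2; simpa [mul_inv_rev] using this.symm
      subst hveq
      rw [memHa]
      refine ⟨h1 * h2⁻¹ * h3, mul_mem (mul_mem hh1 (inv_mem hh2)) hh3, by group⟩
    · -- X ⊆ H * {a}
      intro x hx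
      rw [memHa]
      exact ⟨x * a⁻¹, Subgroup.subset_closure ⟨x, hx, rfl⟩, by group⟩
  · -- H * {a} ⊆ cosetClosure X
    intro x hx
    rw [memHa] at hx
    obtain ⟨h, hh, rfl⟩ := hx
    intro A hA
    obtain ⟨hAc, hXA⟩ := hA
    have haA : a ∈ A := hXA ha
    have mem3 : ∀ p q r : G, p ∈ A → q ∈ A → r ∈ A → p * q⁻¹ * r ∈ A := by
      intro p q r hp hq hr
      exact hAc ⟨p * q⁻¹, ⟨p, hp, q⁻¹, Set.inv_mem_inv.mpr hq, rfl⟩, r, hr, rfl⟩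
    have key : ∀ g ∈ H, g * a ∈ A := by
      intro g hg
      induction hg using Subgroup.closure_induction with
      | mem x hx =>
        obtain ⟨y, hy, rfl⟩ := hx
        simpa using hXA hy
      | one => simpa using haA
      | mul x y hx hy ihx ihy =>
        have : (x * a) * a⁻¹ * (y * a) ∈ A := mem3 _ _ _ ihx haA ihy
        have e : (x * a) * a⁻¹ * (y * a) = x * y * a := by group
        rwa [e] at this
      | inv x hx ihx =>
        have : a * (x * a)⁻¹ * a ∈ A := mem3 _ _ _ haA ihx haA
        have e : a * (x * a)⁻¹ * a = x⁻¹ * a := by group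
        rwa [e] at this
    exact key h hh
end
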